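/- For n ≥ 3, in the strong resolving graph of the inclusion graph G_n on nonempty proper subsets of {1,...,n}, each singleton {i} is adjacent only to its complement {1,...,n}\{i}, and each subset of size n−1 is adjacent only to its complementary singleton. Hence the strong resolving graph contains n connected components each isomorphic to K_2, one for each pair ({i}, {i}^c). -/

import Mathlib

open SimpleGraph Finset

variable {V : Type*}

/-- A set of vertices is resolving if distance vectors to it distinguish vertices. -/
def IsResolving (G : SimpleGraph V) (S : Set V) : Prop :=
  ∀ u v : V, (∀ w ∈ S, G.dist u w = G.dist v w) → u = v

/-- The metric dimension: the least size of a (finite) resolving set. -/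
noncomputable def metricDim (G : SimpleGraph V) : ℕ :=
  sInf {k | ∃ S : Finset V, S.card = k ∧ IsResolving G ↑S}

/-- Two vertices are mutually maximally distant. -/
def MMD (G : SimpleGraph V) (u v : V) : Prop :=
  u ≠ v ∧ (∀ w, G.Adj u w → G.dist v w ≤ G.dist u v) ∧
    (∀ w, G.Adj v w → G.dist u w ≤ G.dist u v)

/-- The strong resolving graph: edges between mutually maximally distant vertices. -/
def strongResolvingGraph (G : SimpleGraph V) : SimpleGraph V where
  Adj u v := MMD G u v
  symm := ⟨by
    rintro u v ⟨hne, h1, h2⟩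
    refine ⟨hne.symm, ?_, ?_⟩
    · intro w hw
      rw [SimpleGraph.dist_comm (u := v) (v := u)]
      exact h2 w hw
    · intro w hw
      rw [SimpleGraph.dist_comm (u := v) (v := u)]
      exact h1 w hw⟩
  loopless := ⟨fun v h => h.1 rfl⟩

/-- A set strongly resolving a graph. -/
def IsStrongResolving (G : SimpleGraph V) (S : Set V) : Prop :=
  ∀ u v : V, u ≠ v → ∃ w ∈ S,
    G.dist w u = G.dist w v + G.dist v u ∨ G.dist w v = G.dist w u + G.dist u v

/-- Strong metric dimension. -/
noncomputable def sdim (G : SimpleGraph V) : ℕ :=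
  sInf {k | ∃ S : Finset V, S.card = k ∧ IsStrongResolving G ↑S}

/-- An independent set of vertices. -/
def IsIndepFinset (G : SimpleGraph V) (S : Finset V) : Prop :=
  ∀ u ∈ S, ∀ v ∈ S, u ≠ v → ¬ G.Adj u v

/-- Independence number. -/
noncomputable def indepNum (G : SimpleGraph V) : ℕ :=
  sSup {k | ∃ S : Finset V, S.card = k ∧ IsIndepFinset G S}

/-- Vertices of the inclusion graph on `{1,...,n}`: nonempty proper subsets. -/
def SubVert (n : ℕ) := {A : Finset (Fin n) // A.Nonempty ∧ A ≠ Finset.univ}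

/-- The inclusion graph on nonempty proper subsets of `{1,...,n}`. -/
def inclGraph (n : ℕ) : SimpleGraph (SubVert n) where
  Adj A B := A.1 ⊂ B.1 ∨ B.1 ⊂ A.1
  symm := ⟨fun _ _ h => h.symm⟩
  loopless := ⟨fun A h => by
    rcases h with h | h <;> exact (ssubset_irrefl A.1) h⟩

/-- Complement of a vertex of the inclusion graph. -/
def complVert {n : ℕ} (A : SubVert n) : SubVert n :=
  ⟨A.1ᶜ,
    Finset.nonempty_iff_ne_empty.mpr fun h => A.2.2 (by simpa using h),
    fun h => (Finset.nonempty_iff_ne_empty.mp A.2.1) (by simpa using h)⟩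

/-- Vertices of the inclusion ideal graph of a product of chain rings:
tuples in a product of chains, excluding bottom and top. -/
def ChainVert {m : ℕ} (d : Fin m → ℕ) := {v : ∀ i, Fin (d i + 2) // v ≠ ⊥ ∧ v ≠ ⊤}

/-- The inclusion graph on a product of chains (minus bottom and top),
modelling the inclusion ideal graph of a product of principal ideal rings. -/
def chainGraph {m : ℕ} (d : Fin m → ℕ) : SimpleGraph (ChainVert d) where
  Adj I J := I.1 < J.1 ∨ J.1 < I.1
  symm := ⟨fun _ _ h => h.symm⟩
  loopless := ⟨fun I h => by rcases h with h | h <;> exact lt_irrefl _ h⟩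

section Aux

variable {n : ℕ}

lemma complVert_val (A : SubVert n) : (complVert A).1 = A.1ᶜ := rfl

lemma complVert_complVert (A : SubVert n) : complVert (complVert A) = A :=
  Subtype.ext (by simp [complVert_val])

lemma eq_complVert_iff {A B : SubVert n} : B = complVert A ↔ B.1 = A.1ᶜ :=
  ⟨fun h => h ▸ rfl, fun h => Subtype.ext h⟩

lemma ne_complVert (A : SubVert n) : A ≠ complVert A := by
  intro h
  obtain ⟨a, ha⟩ := A.2.1
  have : a ∈ (complVert A).1 := h ▸ ha
  rw [complVert_val, Finset.mem_compl] at this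
  exact this ha

lemma exists_not_mem (A : SubVert n) : ∃ b, b ∉ A.1 := by
  by_contra h
  push_neg at h
  exact A.2.2 (Finset.eq_univ_of_forall h)

lemma not_adj_compl (A : SubVert n) : ¬ (inclGraph n).Adj A (complVert A) := by
  rintro (h | h)
  · obtain ⟨a, ha⟩ := A.2.1
    have := h.1 ha
    rw [complVert_val, Finset.mem_compl] at this
    exact this ha
  · obtain ⟨a, ha⟩ := (complVert A).2.1
    have ha' := h.1 ha
    rw [complVert_val, Finset.mem_compl] at ha
    exact ha ha'

/-- Length-3 walk from `A` to its complement, when `A` has at least 2 elements. -/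
lemma exists_walk_compl (hn : 3 ≤ n) (A : SubVert n) (h2 : 2 ≤ A.1.card) :
    ∃ p : (inclGraph n).Walk A (complVert A), p.length = 3 := by
  obtain ⟨a, ha⟩ := A.2.1
  obtain ⟨b, hb⟩ := exists_not_mem A
  obtain ⟨a', ha', haa'⟩ := Finset.exists_mem_ne (s := A.1) (by omega) a
  have hC1 : ({a} : Finset (Fin n)) ≠ Finset.univ := by
    intro h
    have : a' ∈ ({a} : Finset (Fin n)) := by rw [h]; exact Finset.mem_univ a'
    exact haa' (Finset.mem_singleton.mp this)
  set C1 : SubVert n := ⟨{a}, Finset.singleton_nonempty a, hC1⟩ with hC1def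
  have hC2ne : insert a A.1ᶜ ≠ Finset.univ := by
    intro h
    have : a' ∈ insert a A.1ᶜ := by rw [h]; exact Finset.mem_univ a'
    rcases Finset.mem_insert.mp this with h' | h'
    · exact haa' h'
    · exact (Finset.mem_compl.mp h') ha'
  set C2 : SubVert n := ⟨insert a A.1ᶜ, ⟨a, Finset.mem_insert_self a _⟩, hC2ne⟩ with hC2def
  have adj1 : (inclGraph n).Adj A C1 := by
    refine Or.inr ⟨Finset.singleton_subset_iff.mpr ha, fun hsub => ?_⟩
    exact haa' (Finset.mem_singleton.mp (hsub ha'))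
  have adj2 : (inclGraph n).Adj C1 C2 := by
    refine Or.inl ⟨Finset.singleton_subset_iff.mpr (Finset.mem_insert_self a _), fun hsub => ?_⟩
    have hbC2 : b ∈ insert a A.1ᶜ := Finset.mem_insert.mpr (Or.inr (Finset.mem_compl.mpr hb))
    have : b = a := Finset.mem_singleton.mp (hsub hbC2)
    exact hb (this ▸ ha)
  have adj3 : (inclGraph n).Adj C2 (complVert A) := by
    refine Or.inr ?_
    rw [complVert_val]
    exact Finset.ssubset_insert (by simpa using ha)
  exact ⟨SimpleGraph.Walk.cons adj1 (SimpleGraph.Walk.cons adj2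
    (SimpleGraph.Walk.cons adj3 SimpleGraph.Walk.nil)), rfl⟩

lemma reach_and_dist_le_three (hn : 3 ≤ n) (A B : SubVert n) :
    (inclGraph n).Reachable A B ∧ (inclGraph n).dist A B ≤ 3 := by
  by_cases hAB : A = B
  · subst hAB
    refine ⟨SimpleGraph.Reachable.refl A, ?_⟩
    rw [SimpleGraph.dist_self]
    omega
  have hval : A.1 ≠ B.1 := fun h => hAB (Subtype.ext h)
  by_cases h1 : A.1 ⊆ B.1
  · have hadj : (inclGraph n).Adj A B := Or.inl ⟨h1, fun h => hval (le_antisymm h1 h)⟩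
    exact ⟨hadj.reachable, le_trans (SimpleGraph.dist_le hadj.toWalk) (by simp)⟩
  by_cases h2 : B.1 ⊆ A.1
  · have hadj : (inclGraph n).Adj A B := Or.inr ⟨h2, fun h => hval (le_antisymm h h2)⟩
    exact ⟨hadj.reachable, le_trans (SimpleGraph.dist_le hadj.toWalk) (by simp)⟩
  by_cases hu : A.1 ∪ B.1 = Finset.univ
  · by_cases hi : A.1 ∩ B.1 = ∅
    · -- B is the complement of A
      have hBc : B.1 = A.1ᶜ := by
        ext x
        rw [Finset.mem_compl]
        constructor
        · intro hx hxA
          have : x ∈ A.1 ∩ B.1 := Finset.mem_inter.mpr ⟨hxA, hx⟩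
          simp [hi] at this
        · intro hx
          have : x ∈ A.1 ∪ B.1 := by rw [hu]; exact Finset.mem_univ x
          rcases Finset.mem_union.mp this with h | h
          · exact absurd h hx
          · exact h
      have hB : B = complVert A := eq_complVert_iff.mpr hBc
      subst hB
      have hcards : A.1.card + A.1ᶜ.card = n := by
        have := Finset.card_add_card_compl A.1
        simpa using this
      rcases le_or_gt 2 A.1.card with hc | hc
      · obtain ⟨p, hp⟩ := exists_walk_compl hn A hc
        exact ⟨⟨p⟩, le_trans (SimpleGraph.dist_le p) (le_of_eq hp)⟩
      · have hA1 : A.1.card = 1 := by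
          have := Finset.card_pos.mpr A.2.1
          omega
        have hcc : 2 ≤ (complVert A).1.card := by
          rw [complVert_val]; omega
        obtain ⟨p, hp⟩ := exists_walk_compl hn (complVert A) hcc
        have hr : (inclGraph n).Reachable (complVert A) (complVert (complVert A)) := ⟨p⟩
        have hd : (inclGraph n).dist (complVert A) (complVert (complVert A)) ≤ 3 :=
          le_trans (SimpleGraph.dist_le p) (le_of_eq hp)
        rw [complVert_complVert] at hr hd
        exact ⟨hr.symm, by rwa [SimpleGraph.dist_comm]⟩
    · -- common neighbor A ∩ B
      have hine : (A.1 ∩ B.1).Nonempty := Finset.nonempty_iff_ne_empty.mpr hi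
      have hiu : A.1 ∩ B.1 ≠ Finset.univ := by
        intro h
        exact A.2.2 (Finset.eq_univ_of_forall fun x => by
          have : x ∈ A.1 ∩ B.1 := by rw [h]; exact Finset.mem_univ x
          exact (Finset.mem_inter.mp this).1)
      set C : SubVert n := ⟨A.1 ∩ B.1, hine, hiu⟩ with hC
      have adj1 : (inclGraph n).Adj A C := by
        refine Or.inr ⟨Finset.inter_subset_left, fun hsub => ?_⟩
        exact h1 fun x hx => (Finset.mem_inter.mp (hsub hx)).2
      have adj2 : (inclGraph n).Adj C B := by
        refine Or.inl ⟨Finset.inter_subset_right, fun hsub => ?_⟩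
        exact h2 fun x hx => (Finset.mem_inter.mp (hsub hx)).1
      set p := SimpleGraph.Walk.cons adj1 (SimpleGraph.Walk.cons adj2 SimpleGraph.Walk.nil)
      exact ⟨⟨p⟩, le_trans (SimpleGraph.dist_le p) (by simp [p])⟩
  · -- common neighbor A ∪ B
    have hune : (A.1 ∪ B.1).Nonempty := by
      obtain ⟨a, ha⟩ := A.2.1
      exact ⟨a, Finset.mem_union_left _ ha⟩
    set C : SubVert n := ⟨A.1 ∪ B.1, hune, hu⟩ with hC
    have adj1 : (inclGraph n).Adj A C := by
      refine Or.inl ⟨Finset.subset_union_left, fun hsub => ?_⟩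
      exact h2 fun x hx => hsub (Finset.mem_union_right _ hx)
    have adj2 : (inclGraph n).Adj C B := by
      refine Or.inr ⟨Finset.subset_union_right, fun hsub => ?_⟩
      exact h1 fun x hx => hsub (Finset.mem_union_left _ hx)
    set p := SimpleGraph.Walk.cons adj1 (SimpleGraph.Walk.cons adj2 SimpleGraph.Walk.nil)
    exact ⟨⟨p⟩, le_trans (SimpleGraph.dist_le p) (by simp [p])⟩

lemma two_le_dist (hn : 3 ≤ n) {A B : SubVert n} (hne : A ≠ B)
    (hadj : ¬ (inclGraph n).Adj A B) : 2 ≤ (inclGraph n).dist A B := by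
  have hr := (reach_and_dist_le_three hn A B).1
  have h0 : (inclGraph n).dist A B ≠ 0 := by
    rw [Ne, hr.dist_eq_zero_iff]; exact hne
  have h1 : (inclGraph n).dist A B ≠ 1 := by
    rw [Ne, SimpleGraph.dist_eq_one_iff_adj]; exact hadj
  omega

lemma dist_compl (hn : 3 ≤ n) (A : SubVert n) :
    (inclGraph n).dist A (complVert A) = 3 := by
  obtain ⟨hr, hle⟩ := reach_and_dist_le_three hn A (complVert A)
  have h2 : 2 ≤ (inclGraph n).dist A (complVert A) :=
    two_le_dist hn (ne_complVert A) (not_adj_compl A)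
  have hne2 : (inclGraph n).dist A (complVert A) ≠ 2 := by
    intro h
    obtain ⟨p, hp⟩ := hr.exists_walk_length_eq_dist
    rw [h] at hp
    set c : SubVert n := p.getVert 1 with hc
    have hadj : (inclGraph n).Adj A c := by
      have := p.adj_getVert_succ (i := 0) (by omega)
      simpa using this
    have hadj2 : (inclGraph n).Adj c (complVert A) := by
      have := p.adj_getVert_succ (i := 1) (by omega)
      have h2 : p.getVert 2 = complVert A := by
        have := p.getVert_length
        rw [hp] at this
        exact this
      rwa [h2] at this
    obtain ⟨a, ha⟩ := A.2.1
    rcases hadj with h1 | h1 <;> rcases hadj2 with h2 | h2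
    · -- A ⊂ c, c ⊂ Aᶜ
      have := h2.1 (h1.1 ha)
      rw [complVert_val, Finset.mem_compl] at this
      exact this ha
    · -- A ⊂ c, Aᶜ ⊂ c : c = univ
      refine c.2.2 (Finset.eq_univ_of_forall fun x => ?_)
      by_cases hx : x ∈ A.1
      · exact h1.1 hx
      · exact h2.1 (by rwa [complVert_val, Finset.mem_compl])
    · -- c ⊂ A, c ⊂ Aᶜ
      obtain ⟨y, hy⟩ := c.2.1
      have hyA := h1.1 hy
      have hyAc := h2.1 hy
      rw [complVert_val, Finset.mem_compl] at hyAc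
      exact hyAc hyA
    · -- c ⊂ A, Aᶜ ⊂ c
      obtain ⟨b, hb⟩ := exists_not_mem A
      have : b ∈ c.1 := h2.1 (by rwa [complVert_val, Finset.mem_compl])
      exact hb (h1.1 this)
  omega

lemma mmd_compl (hn : 3 ≤ n) (A : SubVert n) : MMD (inclGraph n) A (complVert A) := by
  refine ⟨ne_complVert A, fun w _ => ?_, fun w _ => ?_⟩
  · rw [dist_compl hn A]
    exact (reach_and_dist_le_three hn (complVert A) w).2
  · rw [dist_compl hn A]
    exact (reach_and_dist_le_three hn A w).2

lemma mmd_card_one (hn : 3 ≤ n) (A : SubVert n) (hA : A.1.card = 1)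
    (B : SubVert n) (h : MMD (inclGraph n) A B) : B = complVert A := by
  obtain ⟨a, hAval⟩ := Finset.card_eq_one.mp hA
  obtain ⟨hne, hc1, _⟩ := h
  by_cases hmem : a ∈ B.1
  · -- A ⊂ B, contradiction
    exfalso
    have hsub : A.1 ⊆ B.1 := by rw [hAval]; exact Finset.singleton_subset_iff.mpr hmem
    have hvalne : A.1 ≠ B.1 := fun h' => hne (Subtype.ext h')
    have hadjAB : (inclGraph n).Adj A B := Or.inl ⟨hsub, fun h' => hvalne (le_antisymm hsub h')⟩
    have hdAB : (inclGraph n).dist A B = 1 := SimpleGraph.dist_eq_one_iff_adj.mpr hadjAB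
    obtain ⟨b, hb⟩ := exists_not_mem B
    have hba : b ≠ a := fun h' => hb (h' ▸ hmem)
    have hwu : ({a, b} : Finset (Fin n)) ≠ Finset.univ := by
      intro h'
      have : n ≤ 2 := by
        calc n = (Finset.univ : Finset (Fin n)).card := by simp
        _ = ({a, b} : Finset (Fin n)).card := by rw [h']
        _ ≤ 2 := Finset.card_insert_le a {b} |>.trans (by simp)
      omega
    set w : SubVert n := ⟨{a, b}, ⟨a, by simp⟩, hwu⟩ with hw
    have hAwsub : A.1 ⊆ ({a, b} : Finset (Fin n)) := by
      rw [hAval]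
      intro x hx
      simp only [Finset.mem_singleton] at hx
      simp [hx]
    have hadjAw : (inclGraph n).Adj A w := by
      refine Or.inl ⟨hAwsub, fun h' => ?_⟩
      have : b ∈ A.1 := h' (by simp [hw])
      rw [hAval] at this
      exact hba (Finset.mem_singleton.mp this)
    have hle := hc1 w hadjAw
    rw [hdAB] at hle
    have hBw : B ≠ w := by
      intro h'
      have : b ∈ B.1 := by rw [h', hw]; simp
      exact hb this
    have hnadj : ¬ (inclGraph n).Adj B w := by
      rintro (h' | h')
      · have hsubB : B.1 ⊆ {a} := by
          intro x hx
          have := h'.1 hx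
          simp only [hw, Finset.mem_insert, Finset.mem_singleton] at this
          rcases this with h'' | h''
          · simp [h'']
          · exact absurd (h'' ▸ hx) hb
        rcases Finset.subset_singleton_iff.mp hsubB with h'' | h''
        · exact Finset.nonempty_iff_ne_empty.mp B.2.1 h''
        · exact hne (Subtype.ext (by rw [hAval, h'']))
      · exact hb (h'.1 (by simp [hw]))
    have := two_le_dist hn hBw hnadj
    omega
  · -- a ∉ B
    by_contra hBc
    have haBc : a ∈ B.1ᶜ := Finset.mem_compl.mpr hmem
    have hAsub : A.1 ⊆ B.1ᶜ := by rw [hAval]; exact Finset.singleton_subset_iff.mpr haBc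
    have hA_ne_Bc : A.1 ≠ B.1ᶜ := by
      intro h'
      exact hBc (eq_complVert_iff.mpr (by rw [h', compl_compl]))
    have hadjABc : (inclGraph n).Adj A (complVert B) := by
      refine Or.inl ?_
      rw [complVert_val]
      exact ⟨hAsub, fun h' => hA_ne_Bc (le_antisymm hAsub h')⟩
    have hle := hc1 (complVert B) hadjABc
    rw [dist_compl hn B] at hle
    -- dist A B ≤ 2 via insert a B.1
    have hssub : A.1 ⊂ B.1ᶜ := ⟨hAsub, fun h' => hA_ne_Bc (le_antisymm hAsub h')⟩
    obtain ⟨c, hcBc, hcA⟩ := Finset.exists_of_ssubset hssub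
    rw [hAval, Finset.mem_singleton] at hcA
    rw [Finset.mem_compl] at hcBc
    have hCu : insert a B.1 ≠ Finset.univ := by
      intro h'
      have : c ∈ insert a B.1 := by rw [h']; exact Finset.mem_univ c
      rcases Finset.mem_insert.mp this with h'' | h''
      · exact hcA h''
      · exact hcBc h''
    set C : SubVert n := ⟨insert a B.1, ⟨a, Finset.mem_insert_self a _⟩, hCu⟩ with hC
    obtain ⟨b, hbB⟩ := B.2.1
    have hba : b ≠ a := fun h' => hmem (h' ▸ hbB)
    have hACsub : A.1 ⊆ insert a B.1 := by
      rw [hAval]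
      exact Finset.singleton_subset_iff.mpr (Finset.mem_insert_self a _)
    have adj1 : (inclGraph n).Adj A C := by
      refine Or.inl ⟨hACsub, fun h' => ?_⟩
      have : b ∈ A.1 := h' (Finset.mem_insert_of_mem hbB)
      rw [hAval, Finset.mem_singleton] at this
      exact hba this
    have adj2 : (inclGraph n).Adj C B := Or.inr (Finset.ssubset_insert hmem)
    set p := SimpleGraph.Walk.cons adj1 (SimpleGraph.Walk.cons adj2 SimpleGraph.Walk.nil)
    have hd2 : (inclGraph n).dist A B ≤ 2 := le_trans (SimpleGraph.dist_le p) (by simp [p])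
    omega

lemma mmd_card_pred (hn : 3 ≤ n) (A : SubVert n) (hA : A.1.card = n - 1)
    (B : SubVert n) (h : MMD (inclGraph n) A B) : B = complVert A := by
  have hcc : A.1ᶜ.card = 1 := by
    rw [Finset.card_compl, hA, Fintype.card_fin]
    omega
  obtain ⟨x, hx⟩ := Finset.card_eq_one.mp hcc
  have hxA : x ∉ A.1 := by
    have : x ∈ A.1ᶜ := by rw [hx]; simp
    exact Finset.mem_compl.mp this
  have hmemA : ∀ y, y ∉ A.1 → y = x := by
    intro y hy
    have : y ∈ A.1ᶜ := Finset.mem_compl.mpr hy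
    rw [hx, Finset.mem_singleton] at this
    exact this
  obtain ⟨hne, hc1, _⟩ := h
  by_cases hmem : x ∈ B.1
  · -- x ∈ B, main case
    by_contra hBc
    have hBcsub : B.1ᶜ ⊆ A.1 := by
      intro y hy
      rw [Finset.mem_compl] at hy
      by_contra hyA
      exact hy ((hmemA y hyA) ▸ hmem)
    have hBcne : B.1ᶜ ≠ A.1 := by
      intro h'
      apply hBc
      rw [eq_complVert_iff, ← h', compl_compl]
    have hadjABc : (inclGraph n).Adj A (complVert B) := by
      refine Or.inr ?_
      rw [complVert_val]
      exact ⟨hBcsub, fun h' => hBcne (le_antisymm hBcsub h')⟩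
    have hle := hc1 (complVert B) hadjABc
    rw [dist_compl hn B] at hle
    -- dist A B ≤ 2 via A ∩ B
    have hBnex : B.1 ≠ {x} := by
      intro h'
      apply hBc
      rw [eq_complVert_iff, h', ← hx]
    have hxsub : ({x} : Finset (Fin n)) ⊂ B.1 := by
      refine (Finset.singleton_subset_iff.mpr hmem).ssubset_of_ne ?_
      exact fun h' => hBnex h'.symm
    obtain ⟨y, hyB, hyx⟩ := Finset.exists_of_ssubset hxsub
    rw [Finset.mem_singleton] at hyx
    have hyA : y ∈ A.1 := by
      by_contra hyA
      exact hyx (hmemA y hyA)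
    have hiNe : (A.1 ∩ B.1).Nonempty := ⟨y, Finset.mem_inter.mpr ⟨hyA, hyB⟩⟩
    have hiU : A.1 ∩ B.1 ≠ Finset.univ := by
      intro h'
      exact A.2.2 (Finset.eq_univ_of_forall fun z => by
        have : z ∈ A.1 ∩ B.1 := by rw [h']; exact Finset.mem_univ z
        exact (Finset.mem_inter.mp this).1)
    set C : SubVert n := ⟨A.1 ∩ B.1, hiNe, hiU⟩ with hC
    have adj1 : (inclGraph n).Adj A C := by
      refine Or.inr ⟨Finset.inter_subset_left, fun h' => ?_⟩
      -- h' : A.1 ⊆ A.1 ∩ B.1, so A.1 ⊆ B.1, so B = univ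
      have hAB : A.1 ⊆ B.1 := fun z hz => (Finset.mem_inter.mp (h' hz)).2
      refine B.2.2 (Finset.eq_univ_of_forall fun z => ?_)
      by_cases hz : z ∈ A.1
      · exact hAB hz
      · exact (hmemA z hz) ▸ hmem
    have adj2 : (inclGraph n).Adj C B := by
      refine Or.inl ⟨Finset.inter_subset_right, fun h' => ?_⟩
      have : x ∈ A.1 ∩ B.1 := h' hmem
      exact hxA (Finset.mem_inter.mp this).1
    set p := SimpleGraph.Walk.cons adj1 (SimpleGraph.Walk.cons adj2 SimpleGraph.Walk.nil)
    have hd2 : (inclGraph n).dist A B ≤ 2 := le_trans (SimpleGraph.dist_le p) (by simp [p])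
    omega
  · -- x ∉ B : B ⊂ A, contradiction
    exfalso
    have hsub : B.1 ⊆ A.1 := by
      intro z hz
      by_contra hzA
      exact hmem ((hmemA z hzA) ▸ hz)
    have hvalne : B.1 ≠ A.1 := fun h' => hne (Subtype.ext h'.symm)
    have hBssub : B.1 ⊂ A.1 := ⟨hsub, fun h' => hvalne (le_antisymm hsub h')⟩
    have hadjAB : (inclGraph n).Adj A B := Or.inr hBssub
    have hdAB : (inclGraph n).dist A B = 1 := SimpleGraph.dist_eq_one_iff_adj.mpr hadjAB
    obtain ⟨c, hcA, hcB⟩ := Finset.exists_of_ssubset hBssub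
    obtain ⟨b, hbB⟩ := B.2.1
    have hcb : c ≠ b := fun h' => hcB (h' ▸ hbB)
    have hbA : b ∈ A.1 := hsub hbB
    have hwNe : (A.1.erase b).Nonempty := ⟨c, Finset.mem_erase.mpr ⟨hcb, hcA⟩⟩
    have hwU : A.1.erase b ≠ Finset.univ := by
      intro h'
      have : b ∈ A.1.erase b := by rw [h']; exact Finset.mem_univ b
      exact (Finset.mem_erase.mp this).1 rfl
    set w : SubVert n := ⟨A.1.erase b, hwNe, hwU⟩ with hw
    have hadjAw : (inclGraph n).Adj A w := Or.inr (Finset.erase_ssubset hbA)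
    have hle := hc1 w hadjAw
    rw [hdAB] at hle
    have hBw : B ≠ w := by
      intro h'
      have hbw : b ∈ w.1 := by rw [← h']; exact hbB
      exact (Finset.mem_erase.mp hbw).1 rfl
    have hnadj : ¬ (inclGraph n).Adj B w := by
      rintro (h' | h')
      · have : b ∈ A.1.erase b := h'.1 hbB
        exact (Finset.mem_erase.mp this).1 rfl
      · have : c ∈ B.1 := h'.1 (Finset.mem_erase.mpr ⟨hcb, hcA⟩)
        exact hcB this
    have := two_le_dist hn hBw hnadj
    omega

lemma card_complVert (A : SubVert n) : (complVert A).1.card = n - A.1.card := by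
  rw [complVert_val, Finset.card_compl, Fintype.card_fin]

end Aux

theorem stmt10 (n : ℕ) (hn : 3 ≤ n) :
    (∀ A : SubVert n, A.1.card = 1 →
      ∀ B : SubVert n, (strongResolvingGraph (inclGraph n)).Adj A B ↔ B = complVert A) ∧
    (∀ A : SubVert n, A.1.card = n - 1 →
      ∀ B : SubVert n, (strongResolvingGraph (inclGraph n)).Adj A B ↔ B = complVert A) ∧
    (∀ A : SubVert n, A.1.card = 1 →
      ((strongResolvingGraph (inclGraph n)).connectedComponentMk A).supp
        = {A, complVert A}) := by
  have key1 : ∀ A : SubVert n, A.1.card = 1 →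
      ∀ B : SubVert n, (strongResolvingGraph (inclGraph n)).Adj A B ↔ B = complVert A := by
    intro A hA B
    constructor
    · exact mmd_card_one hn A hA B
    · rintro rfl
      exact mmd_compl hn A
  have key2 : ∀ A : SubVert n, A.1.card = n - 1 →
      ∀ B : SubVert n, (strongResolvingGraph (inclGraph n)).Adj A B ↔ B = complVert A := by
    intro A hA B
    constructor
    · exact mmd_card_pred hn A hA B
    · rintro rfl
      exact mmd_compl hn A
  refine ⟨key1, key2, ?_⟩
  intro A hA
  ext x
  rw [SimpleGraph.ConnectedComponent.mem_supp_iff, SimpleGraph.ConnectedComponent.eq,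
    Set.mem_insert_iff, Set.mem_singleton_iff]
  constructor
  · intro hr
    have main : ∀ (y z : SubVert n) (_ : (strongResolvingGraph (inclGraph n)).Walk y z),
        (y = A ∨ y = complVert A) → (z = A ∨ z = complVert A) := by
      intro y z p
      induction p with
      | nil => exact id
      | cons hadj q ih =>
        intro hy
        apply ih
        rcases hy with rfl | rfl
        · exact Or.inr ((key1 _ hA _).mp hadj)
        · have hcard : (complVert A).1.card = n - 1 := by
            rw [card_complVert, hA]
          have hthis := (key2 _ hcard _).mp hadj
          rw [complVert_complVert] at hthis
          exact Or.inl hthis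
    obtain ⟨p⟩ := hr.symm
    exact main A x p (Or.inl rfl)
  · rintro (rfl | rfl)
    · rfl
    · have hadj : (strongResolvingGraph (inclGraph n)).Adj A (complVert A) :=
        (key1 A hA (complVert A)).mpr rfl
      exact hadj.symm.reachable
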